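/- Let p be a prime and let 𝒳_p be the class of finite groups with self-normalizing Sylow p-subgroups. If X is a normal subgroup of Y with X ∈ 𝒳_p and Y/X ∈ 𝒳_p, then Y ∈ 𝒳_p. -/

import Mathlib

/-- A group `G` belongs to the class `𝒳_p` if every Sylow `p`-subgroup is self-normalizing. -/
def SylowSelfNormalizing (p : ℕ) (G : Type*) [Group G] : Prop :=
  ∀ P : Sylow p G, Subgroup.normalizer ((P : Subgroup G) : Set G) = P

/-- The relative index of a Sylow subgroup in a normal subgroup is not divisible by `p`. -/
lemma sylow_relindex_not_dvd {p : ℕ} [Fact p.Prime] {Y : Type*} [Group Y] [Finite Y]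
    (X : Subgroup Y) [X.Normal] (P : Sylow p Y) :
    ¬ p ∣ (P : Subgroup Y).relIndex X := by
  set Q := (P : Subgroup Y)
  have e1 : Nat.card (Q ⊓ X : Subgroup Y) * Q.relIndex X = Nat.card X := by
    have := Subgroup.relIndex_mul_relIndex (⊥ : Subgroup Y) (Q ⊓ X) X bot_le inf_le_right
    rwa [Subgroup.relIndex_bot_left, Subgroup.relIndex_bot_left,
      Subgroup.inf_relIndex_right] at this
  have e2 : Nat.card (Q ⊓ X : Subgroup Y) * X.relIndex Q = Nat.card Q := by
    have := Subgroup.relIndex_mul_relIndex (⊥ : Subgroup Y) (Q ⊓ X) Q bot_le inf_le_left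
    rwa [Subgroup.relIndex_bot_left, Subgroup.relIndex_bot_left,
      Subgroup.inf_relIndex_left] at this
  have e3 : Nat.card Q * Q.relIndex (Q ⊔ X) = Nat.card (Q ⊔ X : Subgroup Y) := by
    have := Subgroup.relIndex_mul_relIndex (⊥ : Subgroup Y) Q (Q ⊔ X) bot_le le_sup_left
    rwa [Subgroup.relIndex_bot_left, Subgroup.relIndex_bot_left] at this
  have e4 : Nat.card X * X.relIndex Q = Nat.card (Q ⊔ X : Subgroup Y) := by
    have := Subgroup.relIndex_mul_relIndex (⊥ : Subgroup Y) X (Q ⊔ X) bot_le le_sup_right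
    rwa [Subgroup.relIndex_bot_left, Subgroup.relIndex_bot_left,
      Subgroup.relIndex_sup_right] at this
  have key : Q.relIndex X = Q.relIndex (Q ⊔ X) := by
    have h : Nat.card (Q ⊓ X : Subgroup Y) * X.relIndex Q * Q.relIndex X
        = Nat.card (Q ⊓ X : Subgroup Y) * X.relIndex Q * Q.relIndex (Q ⊔ X) := by
      calc Nat.card (Q ⊓ X : Subgroup Y) * X.relIndex Q * Q.relIndex X
          = Nat.card (Q ⊓ X : Subgroup Y) * Q.relIndex X * X.relIndex Q := by ring
        _ = Nat.card X * X.relIndex Q := by rw [e1]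
        _ = Nat.card (Q ⊔ X : Subgroup Y) := e4
        _ = Nat.card Q * Q.relIndex (Q ⊔ X) := e3.symm
        _ = Nat.card (Q ⊓ X : Subgroup Y) * X.relIndex Q * Q.relIndex (Q ⊔ X) := by rw [e2]
    have hpos : 0 < Nat.card (Q ⊓ X : Subgroup Y) * X.relIndex Q := by
      rw [e2]; exact Nat.card_pos
    exact Nat.eq_of_mul_eq_mul_left hpos
      (by rw [mul_comm _ (Q.relIndex X), mul_comm _ (Q.relIndex (Q ⊔ X))] at h ⊢; omega)
  rw [key]
  intro hdvd
  exact P.not_dvd_index (hdvd.trans (Subgroup.relIndex_dvd_index_of_le le_sup_left))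

/-- If `X ⊴ Y` with `X ∈ 𝒳_p` and `Y/X ∈ 𝒳_p`, then `Y ∈ 𝒳_p`. -/
theorem stmt11 {p : ℕ} [Fact p.Prime] {Y : Type*} [Group Y] [Finite Y]
    (X : Subgroup Y) [X.Normal]
    (hX : SylowSelfNormalizing p X) (hQ : SylowSelfNormalizing p (Y ⧸ X)) :
    SylowSelfNormalizing p Y := by
  intro P
  refine le_antisymm ?_ Subgroup.le_normalizer
  intro y hy
  set f := QuotientGroup.mk' X with hf
  have hsurj : Function.Surjective f := QuotientGroup.mk'_surjective X
  -- the image of y in the quotient normalizes the image of P, a Sylow of Y/X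
  have h1 : f y ∈ Subgroup.normalizer (((P : Subgroup Y).map f : Subgroup (Y ⧸ X)) : Set (Y ⧸ X)) :=
    Subgroup.le_normalizer_map f ⟨y, hy, rfl⟩
  have h2 : Subgroup.normalizer (((P : Subgroup Y).map f : Subgroup (Y ⧸ X)) : Set (Y ⧸ X)) = (P : Subgroup Y).map f := by
    have := hQ (P.mapSurjective hsurj)
    rwa [Sylow.coe_mapSurjective] at this
  rw [h2] at h1
  -- hence y ∈ P ⊔ X
  have hyPX : y ∈ (P : Subgroup Y) ⊔ X := by
    have h3 : y ∈ ((P : Subgroup Y).map f).comap f := h1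
    rwa [Subgroup.comap_map_eq, QuotientGroup.ker_mk'] at h3
  rw [← SetLike.mem_coe, Subgroup.mul_normal] at hyPX
  obtain ⟨a, ha, x, hx, rfl⟩ := hyPX
  -- x ∈ X normalizes P
  have hxn : x ∈ Subgroup.normalizer ((P : Subgroup Y) : Set Y) := by
    have haN : a ∈ Subgroup.normalizer ((P : Subgroup Y) : Set Y) := Subgroup.le_normalizer ha
    have : a⁻¹ * (a * x) ∈ Subgroup.normalizer ((P : Subgroup Y) : Set Y) := mul_mem (inv_mem haN) hy
    simpa using this
  -- P ∩ X is a Sylow p-subgroup of X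
  have hpg : IsPGroup p ((P : Subgroup Y).subgroupOf X) := P.2.comap_subtype
  have hidx : ¬ p ∣ ((P : Subgroup Y).subgroupOf X).index :=
    sylow_relindex_not_dvd X P
  have hSN := hX (hpg.toSylow hidx)
  rw [IsPGroup.toSylow_coe] at hSN
  -- x normalizes P ∩ X inside X, hence x ∈ P ∩ X ≤ P
  have hxP : x ∈ (P : Subgroup Y) := by
    have hmem : (⟨x, hx⟩ : X) ∈ Subgroup.normalizer ((((P : Subgroup Y).subgroupOf X) : Subgroup X) : Set X) := by
      rw [Subgroup.mem_normalizer_iff]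
      intro h
      rw [Subgroup.mem_normalizer_iff] at hxn
      simp only [Subgroup.mem_subgroupOf]
      simpa using hxn (h : Y)
    rw [hSN] at hmem
    exact hmem
  exact mul_mem ha hxP
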